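/- arXiv:1810.07627 — 3 statements merged into one kernel-verified Lean document; each statement's English description precedes it below -/
import Mathlib

section
/- Let G be a finite group, m a positive integer, and let D be the set of maximal cyclic subgroups of G whose orders are divisible by m. Define C₁ ≈ₘ C₂ iff m divides |C₁ ∩ C₂|. Then ≈ₘ is an equivalence relation on D. -/
open SimpleGraph

/-- The enhanced power graph of a group. -/
def enhancedPowerGraph (G : Type*) [Group G] : SimpleGraph G where
  Adj x y := x ≠ y ∧ ∃ z : G, x ∈ Subgroup.zpowers z ∧ y ∈ Subgroup.zpowers z
  symm := by constructor; rintro x y ⟨h, z, hx, hy⟩; exact ⟨h.symm, z, hy, hx⟩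
  loopless := by constructor; rintro x ⟨h, -⟩; exact h rfl

/-- The (undirected) power graph of a group. -/
def powerGraph (G : Type*) [Group G] : SimpleGraph G where
  Adj x y := x ≠ y ∧ (x ∈ Subgroup.zpowers y ∨ y ∈ Subgroup.zpowers x)
  symm := by constructor; rintro x y ⟨h, hz⟩; exact ⟨h.symm, hz.symm⟩
  loopless := by constructor; rintro x ⟨h, -⟩; exact h rfl

/-- The strong product of two simple graphs. -/
def strongProd {α β : Type*} (Γ : SimpleGraph α) (Δ : SimpleGraph β) :
    SimpleGraph (α × β) where
  Adj p q := (p.1 = q.1 ∧ Δ.Adj p.2 q.2) ∨ (Γ.Adj p.1 q.1 ∧ p.2 = q.2) ∨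
    (Γ.Adj p.1 q.1 ∧ Δ.Adj p.2 q.2)
  symm := by
    constructor
    rintro ⟨a, b⟩ ⟨c, d⟩ (⟨h1, h2⟩ | ⟨h1, h2⟩ | ⟨h1, h2⟩)
    · exact Or.inl ⟨h1.symm, h2.symm⟩
    · exact Or.inr (Or.inl ⟨h1.symm, h2.symm⟩)
    · exact Or.inr (Or.inr ⟨h1.symm, h2.symm⟩)
  loopless := by
    constructor
    rintro ⟨a, b⟩ (⟨-, h⟩ | ⟨h, -⟩ | ⟨h, -⟩) <;> exact h.ne rfl

/-- The automorphism group of a simple graph, as a subgroup of permutations. -/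
def graphAut {V : Type*} (Γ : SimpleGraph V) : Subgroup (Equiv.Perm V) where
  carrier := {σ | ∀ x y, Γ.Adj (σ x) (σ y) ↔ Γ.Adj x y}
  one_mem' := fun _ _ => Iff.rfl
  mul_mem' := by
    intro σ τ hσ hτ x y
    simpa [Equiv.Perm.mul_apply] using (hσ (τ x) (τ y)).trans (hτ x y)
  inv_mem' := by
    intro σ hσ x y
    simpa using (hσ (σ⁻¹ x) (σ⁻¹ y)).symm

/-- A subgroup is maximal cyclic if it is maximal among cyclic subgroups. -/
def IsMaxCyclic {G : Type*} [Group G] (C : Subgroup G) : Prop :=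
  Maximal (fun K : Subgroup G => ∃ g : G, K = Subgroup.zpowers g) C

/-- The closed neighborhood of a vertex. -/
def closedNbhd {V : Type*} (Γ : SimpleGraph V) (x : V) : Set V :=
  Γ.neighborSet x ∪ {x}


open Subgroup Finset in
lemma aux_mem_zpowers {H : Type*} [Group H] [Finite H] [IsCyclic H] {m : ℕ}
    (hm : 0 < m) {a b : H} (ha : orderOf a = m) (hb : b ^ m = 1) :
    b ∈ Subgroup.zpowers a := by
  classical
  haveI := Fintype.ofFinite H
  have hle : (Finset.univ.filter fun x : H => x ^ m = 1).card ≤ m :=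
    IsCyclic.card_pow_eq_one_le hm
  have hsub : (Subgroup.zpowers a : Set H).toFinset ⊆
      Finset.univ.filter fun x : H => x ^ m = 1 := by
    intro x hx
    rw [Set.mem_toFinset] at hx
    obtain ⟨k, rfl⟩ := hx
    simp only [Finset.mem_filter, Finset.mem_univ, true_and]
    rw [← zpow_natCast, ← zpow_mul, mul_comm, zpow_mul, zpow_natCast, ← ha,
      pow_orderOf_eq_one, one_zpow]
  have hcard : (Subgroup.zpowers a : Set H).toFinset.card = m := by
    rw [Set.toFinset_card]; simp only [SetLike.coe_sort_coe]; rw [Fintype.card_zpowers, ha]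
  have heq := Finset.eq_of_subset_of_card_le hsub (by omega)
  have : b ∈ Finset.univ.filter fun x : H => x ^ m = 1 := by simpa using hb
  rw [← heq, Set.mem_toFinset] at this
  exact this

lemma aux_isCyclic_zpowers {G : Type*} [Group G] (g : G) :
    IsCyclic ↥(Subgroup.zpowers g) := by
  refine ⟨⟨⟨g, Subgroup.mem_zpowers g⟩, fun x => ?_⟩⟩
  obtain ⟨k, hk⟩ := x.2
  exact ⟨k, Subtype.ext (by push_cast; exact hk)⟩

lemma aux_order_elem {H : Type*} [Group H] [Finite H] {m : ℕ} (hm : 0 < m)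
    (A : Subgroup H) [IsCyclic A] (hdvd : m ∣ Nat.card A) :
    ∃ a : H, a ∈ A ∧ orderOf a = m := by
  obtain ⟨x, hx⟩ := IsCyclic.exists_ofOrder_eq_natCard (α := ↥A)
  refine ⟨(x : H) ^ (Nat.card A / m), pow_mem x.2 _, ?_⟩
  have hco : orderOf (x : H) = Nat.card A := by rw [Subgroup.orderOf_coe, hx]
  have hne : orderOf (x : H) ≠ 0 := by
    rw [hco]; exact Nat.card_pos.ne'
  have hmd : m ∣ orderOf (x : H) := hco ▸ hdvd
  have := orderOf_pow_orderOf_div hne hmd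
  rwa [hco] at this

theorem stmt_6 {G : Type*} [Group G] [Fintype G] (m : ℕ) (hm : 0 < m) :
    Equivalence (fun C₁ C₂ : {C : Subgroup G // IsMaxCyclic C ∧ m ∣ Nat.card ↥C} =>
      m ∣ Nat.card ↥(C₁.1 ⊓ C₂.1)) := by
  constructor
  · intro C; rw [inf_idem]; exact C.2.2
  · intro C₁ C₂ h; rwa [inf_comm] at h
  · intro C₁ C₂ C₃ h12 h23
    obtain ⟨g, hg⟩ := C₂.2.1.1
    haveI : IsCyclic ↥(C₂.1 : Subgroup G) := hg ▸ aux_isCyclic_zpowers g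
    set A : Subgroup ↥(C₂.1 : Subgroup G) := (C₁.1 ⊓ C₂.1).subgroupOf C₂.1 with hA
    set B : Subgroup ↥(C₂.1 : Subgroup G) := (C₂.1 ⊓ C₃.1).subgroupOf C₂.1 with hB
    have cardA : Nat.card A = Nat.card ↥(C₁.1 ⊓ C₂.1) :=
      Nat.card_congr (Subgroup.subgroupOfEquivOfLe inf_le_right).toEquiv
    have cardB : Nat.card B = Nat.card ↥(C₂.1 ⊓ C₃.1) :=
      Nat.card_congr (Subgroup.subgroupOfEquivOfLe inf_le_left).toEquiv
    obtain ⟨a, haA, ha⟩ := aux_order_elem hm A (cardA ▸ h12)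
    obtain ⟨b, hbB, hb⟩ := aux_order_elem hm B (cardB ▸ h23)
    have hab : b ∈ Subgroup.zpowers a :=
      aux_mem_zpowers hm ha (orderOf_dvd_iff_pow_eq_one.mp (by rw [hb]))
    have hba : a ∈ Subgroup.zpowers b :=
      aux_mem_zpowers hm hb (orderOf_dvd_iff_pow_eq_one.mp (by rw [ha]))
    have haB : a ∈ B := Subgroup.zpowers_le.mpr hbB hba
    have hle : Subgroup.zpowers a ≤ A ⊓ B := Subgroup.zpowers_le.mpr ⟨haA, haB⟩
    have hm1 : m ∣ Nat.card ↥(A ⊓ B) := by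
      have h := Subgroup.card_dvd_of_le hle
      rwa [Nat.card_zpowers, ha] at h
    have hAB : A ⊓ B = ((C₁.1 ⊓ C₂.1) ⊓ (C₂.1 ⊓ C₃.1)).subgroupOf C₂.1 := by
      simp only [hA, hB, Subgroup.subgroupOf, Subgroup.comap_inf]
    have cardAB : Nat.card ↥(A ⊓ B) = Nat.card ↥((C₁.1 ⊓ C₂.1) ⊓ (C₂.1 ⊓ C₃.1)) := by
      rw [hAB]
      exact Nat.card_congr
        (Subgroup.subgroupOfEquivOfLe (inf_le_left.trans inf_le_right)).toEquiv
    rw [cardAB] at hm1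
    refine hm1.trans (Subgroup.card_dvd_of_le ?_)
    exact le_inf (inf_le_left.trans inf_le_left) (inf_le_right.trans inf_le_right)
end

section
/- Let G be a finite group, m a positive integer, D the set of maximal cyclic subgroups of G with order divisible by m, and ≈ₘ the equivalence relation on D given by C₁ ≈ₘ C₂ iff m divides |C₁ ∩ C₂|. Then the number of elements of G of order m equals φ(m) times the number of ≈ₘ-equivalence classes, where φ is Euler's totient function. -/
open SimpleGraph

open Subgroup

section aux
variable {G : Type*} [Group G]

lemma myIsCyclicZpowers (g : G) : IsCyclic ↥(zpowers g) := by
  refine ⟨⟨⟨g, mem_zpowers g⟩, ?_⟩⟩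
  rintro ⟨x, hx⟩
  obtain ⟨k, rfl⟩ := hx
  exact ⟨k, by ext; simp⟩

/-- In a finite cyclic group, elements with the same order generate the same subgroup. -/
lemma myZpowersEq {K : Type*} [Group K] [Finite K] [IsCyclic K]
    {a b : K} (h : orderOf a = orderOf b) : zpowers a = zpowers b := by
  have := Fintype.ofFinite K
  classical
  have key : ∀ x y : K, orderOf x = orderOf y → y ∈ zpowers x := by
    intro x y hxy
    have hn : 0 < orderOf x := orderOf_pos x
    have hle := IsCyclic.card_pow_eq_one_le (α := K) hn
    set S : Finset K := Finset.univ.filter (fun z => z ^ orderOf x = 1) with hS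
    set A : Finset K := (zpowers x : Set K).toFinset with hA
    have hAS : A ⊆ S := by
      intro z hz
      simp only [hA, Set.mem_toFinset, SetLike.mem_coe] at hz
      obtain ⟨k, rfl⟩ := hz
      simp only [hS, Finset.mem_filter, Finset.mem_univ, true_and]
      rw [← zpow_natCast, ← zpow_mul, mul_comm, zpow_mul, zpow_natCast,
        pow_orderOf_eq_one, one_zpow]
    have hAcard : A.card = orderOf x := by
      rw [hA, Set.toFinset_card, ← Nat.card_eq_fintype_card, SetLike.coe_sort_coe,
        Nat.card_zpowers]
    have hEq : A = S := Finset.eq_of_subset_of_card_le hAS (by omega)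
    have hyS : y ∈ S := by
      simp only [hS, Finset.mem_filter, Finset.mem_univ, true_and, hxy,
        pow_orderOf_eq_one]
    rw [← hEq] at hyS
    simpa [hA] using hyS
  exact le_antisymm (zpowers_le.mpr (key b a h.symm)) (zpowers_le.mpr (key a b h))

lemma myZpowersEqG [Finite G] {g x y : G} (hx : x ∈ zpowers g) (hy : y ∈ zpowers g)
    (h : orderOf x = orderOf y) : zpowers x = zpowers y := by
  have : IsCyclic ↥(zpowers g) := myIsCyclicZpowers g
  have key : zpowers (⟨x, hx⟩ : ↥(zpowers g)) = zpowers (⟨y, hy⟩ : ↥(zpowers g)) :=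
    myZpowersEq (by rw [Subgroup.orderOf_mk, Subgroup.orderOf_mk, h])
  have := congrArg (Subgroup.map (zpowers g).subtype) key
  rwa [MonoidHom.map_zpowers, MonoidHom.map_zpowers] at this

lemma myExistsOrderOf {K : Type*} [Group K] [Finite K] [IsCyclic K] {m : ℕ}
    (hm : 0 < m) (h : m ∣ Nat.card K) : ∃ a : K, orderOf a = m := by
  obtain ⟨g, hg⟩ := IsCyclic.exists_generator (α := K)
  have hord : orderOf g = Nat.card K := orderOf_eq_card_of_forall_mem_zpowers hg
  have h1 : orderOf g ≠ 0 := by rw [hord]; exact Nat.card_pos.ne'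
  exact ⟨g ^ (orderOf g / m), orderOf_pow_orderOf_div h1 (hord ▸ h)⟩

lemma myExistsOrderOfLe [Finite G] {g : G} {H : Subgroup G} (hH : H ≤ zpowers g)
    {m : ℕ} (hm : 0 < m) (hd : m ∣ Nat.card H) : ∃ y ∈ H, orderOf y = m := by
  have : IsCyclic ↥(zpowers g) := myIsCyclicZpowers g
  have hcard : Nat.card (H.subgroupOf (zpowers g)) = Nat.card H :=
    Nat.card_congr (Subgroup.subgroupOfEquivOfLe hH).toEquiv
  obtain ⟨a, ha⟩ := myExistsOrderOf (K := ↥(H.subgroupOf (zpowers g))) hm (hcard ▸ hd)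
  refine ⟨((a : ↥(zpowers g)) : G), ?_, ?_⟩
  · exact Subgroup.mem_subgroupOf.mp a.2
  · rw [Subgroup.orderOf_coe, Subgroup.orderOf_coe, ha]

lemma myKeyIff [Finite G] {m : ℕ} (hm : 0 < m) {C C' : Subgroup G}
    (hC : ∃ g : G, C = zpowers g) (hC' : ∃ g : G, C' = zpowers g)
    {x : G} (hx : orderOf x = m) (hxC : x ∈ C) :
    m ∣ Nat.card ↥(C ⊓ C') ↔ zpowers x ≤ C' := by
  constructor
  · intro hdvd
    obtain ⟨g', rfl⟩ := hC'
    obtain ⟨y, hy, hym⟩ := myExistsOrderOfLe (H := C ⊓ _) inf_le_right hm hdvd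
    obtain ⟨g, rfl⟩ := hC
    have : zpowers x = zpowers y := myZpowersEqG hxC hy.1 (by rw [hx, hym])
    rw [this]
    exact zpowers_le.mpr hy.2
  · intro hle
    have : zpowers x ≤ C ⊓ C' := le_inf (zpowers_le.mpr hxC) hle
    have := Subgroup.card_dvd_of_le this
    rwa [Nat.card_zpowers, hx] at this
end aux

theorem stmt_7 {G : Type*} [Group G] [Fintype G] (m : ℕ) (hm : 0 < m) :
    Nat.card {x : G | orderOf x = m} =
      Nat.totient m *
        Nat.card {s : Set (Subgroup G) |
          ∃ C : Subgroup G, IsMaxCyclic C ∧ m ∣ Nat.card ↥C ∧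
            s = {C' : Subgroup G | IsMaxCyclic C' ∧ m ∣ Nat.card ↥C' ∧
              m ∣ Nat.card ↥(C ⊓ C')}} := by
  classical
  set Z : Set (Subgroup G) := {H | ∃ x : G, orderOf x = m ∧ H = zpowers x} with hZ
  set F : Subgroup G → Set (Subgroup G) :=
    fun H => {C' | IsMaxCyclic C' ∧ m ∣ Nat.card ↥C' ∧ H ≤ C'} with hF
  set S : Set (Set (Subgroup G)) := {s |
          ∃ C : Subgroup G, IsMaxCyclic C ∧ m ∣ Nat.card ↥C ∧
            s = {C' : Subgroup G | IsMaxCyclic C' ∧ m ∣ Nat.card ↥C' ∧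
              m ∣ Nat.card ↥(C ⊓ C')}} with hSdef
  -- Claim A: for H = zpowers x ∈ Z and C maximal cyclic containing x, the class of C is F H
  have claimA : ∀ (x : G), orderOf x = m → ∀ C : Subgroup G, IsMaxCyclic C → x ∈ C →
      {C' : Subgroup G | IsMaxCyclic C' ∧ m ∣ Nat.card ↥C' ∧ m ∣ Nat.card ↥(C ⊓ C')}
        = F (zpowers x) := by
    intro x hx C hC hxC
    ext C'
    simp only [hF, Set.mem_setOf_eq, and_congr_right_iff]
    intro hC' hdvd
    exact myKeyIff hm hC.prop hC'.prop hx hxC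
  -- every element of order m lies in a maximal cyclic subgroup
  have exMax : ∀ x : G, ∃ C : Subgroup G, IsMaxCyclic C ∧ x ∈ C := by
    intro x
    obtain ⟨C, hle, hmax⟩ := Finite.exists_le_maximal
      (p := fun K : Subgroup G => ∃ g : G, K = zpowers g) (a := zpowers x) ⟨x, rfl⟩
    exact ⟨C, hmax, hle (mem_zpowers x)⟩
  -- S = F '' Z
  have hSim : S = F '' Z := by
    ext s
    constructor
    · rintro ⟨C, hC, hdvd, rfl⟩
      obtain ⟨g, hg⟩ := hC.prop
      obtain ⟨x, hxC, hx⟩ := myExistsOrderOfLe (H := C) (le_of_eq hg) hm hdvd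
      exact ⟨zpowers x, ⟨x, hx, rfl⟩, (claimA x hx C hC hxC).symm⟩
    · rintro ⟨H, ⟨x, hx, rfl⟩, rfl⟩
      obtain ⟨C, hC, hxC⟩ := exMax x
      have hdvd : m ∣ Nat.card C := by
        have := Subgroup.card_dvd_of_le (zpowers_le.mpr hxC)
        rwa [Nat.card_zpowers, hx] at this
      exact ⟨C, hC, hdvd, (claimA x hx C hC hxC).symm⟩
  -- F is injective on Z
  have hinj : Set.InjOn F Z := by
    rintro H ⟨x, hx, rfl⟩ H' ⟨x', hx', rfl⟩ heq
    obtain ⟨C, hC, hxC⟩ := exMax x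
    have hdvd : m ∣ Nat.card C := by
      have := Subgroup.card_dvd_of_le (zpowers_le.mpr hxC)
      rwa [Nat.card_zpowers, hx] at this
    have hCF : C ∈ F (zpowers x) := ⟨hC, hdvd, zpowers_le.mpr hxC⟩
    rw [heq] at hCF
    obtain ⟨g, hg⟩ := hC.prop
    exact myZpowersEqG (g := g) (hg ▸ hxC) (hg ▸ hCF.2.2 (mem_zpowers x'))
      (by rw [hx, hx'])
  have hcardSZ : Nat.card ↥S = Nat.card ↥Z := by
    rw [hSim, Nat.card_coe_set_eq, Nat.card_coe_set_eq,
      Set.ncard_image_of_injOn hinj]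
  -- counting elements of order m
  set ZF : Finset (Subgroup G) := Finset.univ.filter (· ∈ Z) with hZF
  set T : Finset G := Finset.univ.filter (fun x => orderOf x = m) with hT
  have hmem : ∀ x ∈ T, zpowers x ∈ ZF := by
    intro x hx
    simp only [hT, Finset.mem_filter, Finset.mem_univ, true_and] at hx
    simp only [hZF, Finset.mem_filter, Finset.mem_univ, true_and]
    exact ⟨x, hx, rfl⟩
  have hfiber : ∀ H ∈ ZF, (T.filter (fun x => zpowers x = H)).card = m.totient := by
    intro H hH
    simp only [hZF, Finset.mem_filter, Finset.mem_univ, true_and] at hH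
    obtain ⟨x0, hx0, rfl⟩ := hH
    have hcyc : IsCyclic ↥(zpowers x0) := myIsCyclicZpowers x0
    have hcard : Fintype.card ↥(zpowers x0) = m := by
      rw [← Nat.card_eq_fintype_card, Nat.card_zpowers, hx0]
    have htot : (Finset.univ.filter (fun a : ↥(zpowers x0) => orderOf a = m)).card
        = m.totient := IsCyclic.card_orderOf_eq_totient (by rw [hcard])
    rw [← htot]
    refine Finset.card_bij' (fun x hx => (⟨x, by
        simp only [hT, Finset.mem_filter] at hx
        exact hx.2 ▸ mem_zpowers x⟩ : ↥(zpowers x0)))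
      (fun a _ => (a : G)) ?_ ?_ ?_ ?_
    · intro a ha
      simp only [hT, Finset.mem_filter, Finset.mem_univ, true_and] at ha ⊢
      rw [Subgroup.orderOf_mk]
      exact ha.1
    · intro a ha
      simp only [Finset.mem_filter, Finset.mem_univ, true_and] at ha
      have hord : orderOf (a : G) = m := by rw [Subgroup.orderOf_coe, ha]
      simp only [hT, Finset.mem_filter, Finset.mem_univ, true_and]
      refine ⟨hord, ?_⟩
      apply Subgroup.eq_of_le_of_card_ge (zpowers_le.mpr a.2)
      rw [Nat.card_zpowers, Nat.card_zpowers, hord, hx0]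
    · intro a ha; rfl
    · intro a ha; rfl
  have hTcard : T.card = m.totient * ZF.card := by
    rw [Finset.card_eq_sum_card_fiberwise hmem, Finset.sum_congr rfl hfiber,
      Finset.sum_const, smul_eq_mul, mul_comm]
  have h1 : Nat.card {x : G | orderOf x = m} = T.card := by
    rw [Nat.card_eq_fintype_card, Fintype.card_subtype]
    apply congrArg Finset.card
    ext x
    simp [hT]
  have h2 : Nat.card ↥Z = ZF.card := by
    rw [Nat.card_eq_fintype_card, Fintype.card_subtype]
  show Nat.card {x : G | orderOf x = m} = m.totient * Nat.card ↥S
  rw [h1, hTcard, hcardSZ, h2]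
end

section
/- C₂, C₃, and the Klein four-group C₂ × C₂ are the only non-trivial finite groups G for which the order of the automorphism group of the enhanced power graph of G is squarefree. -/
open SimpleGraph

section Lemmas

open Subgroup Equiv

variable {V : Type*}

lemma swap_mem_graphAut [DecidableEq V] (Γ : SimpleGraph V) {a b : V}
    (h : ∀ x, x ≠ a → x ≠ b → (Γ.Adj a x ↔ Γ.Adj b x)) :
    Equiv.swap a b ∈ graphAut Γ := by
  have h' : ∀ x, x ≠ a → x ≠ b → (Γ.Adj x a ↔ Γ.Adj x b) := by
    intro x hxa hxb
    rw [Γ.adj_comm x a, Γ.adj_comm x b]; exact h x hxa hxb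
  intro x y
  simp only [Equiv.swap_apply_def]
  split_ifs <;> subst_vars <;>
    first
      | rfl
      | simp
      | (exact Γ.adj_comm _ _)
      | (exact (h _ ‹_› ‹_›).symm)
      | (exact h _ ‹_› ‹_›)
      | (exact (h' _ ‹_› ‹_›).symm)
      | (exact h' _ ‹_› ‹_›)

lemma four_dvd_card {K : Type*} [Group K] [Finite K] {σ τ : K}
    (e1 : σ * σ = 1) (e2 : τ * τ = 1) (e3 : σ * τ = τ * σ)
    (hσ1 : σ ≠ 1) (hτ1 : τ ≠ 1) (hne : σ ≠ τ) : 4 ∣ Nat.card K := by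
  classical
  have d1 : σ * (σ * τ) = τ := by rw [← mul_assoc, e1, one_mul]
  have d2 : τ * (σ * τ) = σ := by rw [← mul_assoc, ← e3, mul_assoc, e2, mul_one]
  have d3 : (σ * τ) * σ = τ := by rw [e3, mul_assoc, e1, mul_one]
  have d4 : (σ * τ) * τ = σ := by rw [mul_assoc, e2, mul_one]
  have d5 : (σ * τ) * (σ * τ) = 1 := by rw [← mul_assoc, d3, e2]
  have mem : ∀ u : K, u ∈ ({1, σ, τ, σ * τ} : Set K) ↔ (u = 1 ∨ u = σ ∨ u = τ ∨ u = σ * τ) := by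
    intro u; simp [Set.mem_insert_iff]
  set S : Subgroup K :=
    { carrier := {1, σ, τ, σ * τ}
      one_mem' := by rw [mem]; tauto
      mul_mem' := by
        intro x y hx hy
        rw [mem] at hx hy ⊢
        obtain rfl | rfl | rfl | rfl := hx <;> obtain rfl | rfl | rfl | rfl := hy
        · rw [one_mul]; tauto
        · rw [one_mul]; tauto
        · rw [one_mul]; tauto
        · rw [one_mul]; tauto
        · rw [mul_one]; tauto
        · rw [e1]; tauto
        · tauto
        · rw [d1]; tauto
        · rw [mul_one]; tauto
        · rw [← e3]; tauto
        · rw [e2]; tauto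
        · rw [d2]; tauto
        · rw [mul_one]; tauto
        · rw [d3]; tauto
        · rw [d4]; tauto
        · rw [d5]; tauto
      inv_mem' := by
        intro x hx
        rw [mem] at hx
        obtain rfl | rfl | rfl | rfl := hx <;> rw [mem]
        · rw [inv_one]; tauto
        · rw [inv_eq_of_mul_eq_one_right e1]; tauto
        · rw [inv_eq_of_mul_eq_one_right e2]; tauto
        · rw [inv_eq_of_mul_eq_one_right d5]; tauto } with hS
  have hinvσ : σ⁻¹ = σ := inv_eq_of_mul_eq_one_right e1
  have hστ1 : σ * τ ≠ 1 := by
    intro h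
    have h1 : σ = τ⁻¹ := eq_inv_of_mul_eq_one_left h
    rw [inv_eq_of_mul_eq_one_right e2] at h1
    exact hne h1
  have hστσ : σ * τ ≠ σ := fun h => hτ1 (by rwa [mul_eq_left] at h)
  have hσττ : σ * τ ≠ τ := fun h => hσ1 (by rwa [mul_eq_right] at h)
  have hcard : Nat.card S = 4 := by
    have hc : (S : Set K) = {1, σ, τ, σ * τ} := rfl
    have step : Nat.card S = ({1, σ, τ, σ * τ} : Set K).ncard := by
      rw [← Nat.card_coe_set_eq]
      exact Nat.card_congr (Equiv.setCongr hc)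
    rw [step,Set.ncard_insert_of_notMem (by simp [hσ1.symm, hτ1.symm, Ne.symm hστ1]) (Set.toFinite _),
      Set.ncard_insert_of_notMem (by simp [hne, Ne.symm hστσ]) (Set.toFinite _),
      Set.ncard_insert_of_notMem (by simp [Ne.symm hσττ]) (Set.toFinite _),
      Set.ncard_singleton]
  have := Subgroup.card_subgroup_dvd_card S
  rwa [hcard] at this

lemma not_squarefree_of_four_dvd {n : ℕ} (h : 4 ∣ n) : ¬ Squarefree n := by
  intro hsf
  have : (2 : ℕ) * 2 ∣ n := by simpa using h
  exact (Nat.prime_two).not_isUnit (hsf 2 this)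

end Lemmas
section EPG

open Subgroup

lemma swap_comm_disjoint {V : Type*} [DecidableEq V] {a b c d : V}
    (hac : a ≠ c) (had : a ≠ d) (hbc : b ≠ c) (hbd : b ≠ d) :
    Equiv.swap a b * Equiv.swap c d = Equiv.swap c d * Equiv.swap a b := by
  ext x
  simp only [Equiv.Perm.mul_apply, Equiv.swap_apply_def]
  split_ifs <;> simp_all

lemma not_squarefree_aut {V : Type*} [Finite V] [DecidableEq V] (Γ : SimpleGraph V)
    {a b c d : V} (hab : a ≠ b) (hcd : c ≠ d)
    (hac : a ≠ c) (had : a ≠ d) (hbc : b ≠ c) (hbd : b ≠ d)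
    (h1 : Equiv.swap a b ∈ graphAut Γ) (h2 : Equiv.swap c d ∈ graphAut Γ) :
    ¬ Squarefree (Nat.card ↥(graphAut Γ)) := by
  apply not_squarefree_of_four_dvd
  refine four_dvd_card (σ := ⟨Equiv.swap a b, h1⟩) (τ := ⟨Equiv.swap c d, h2⟩) ?_ ?_ ?_ ?_ ?_ ?_
  · exact Subtype.ext (Equiv.swap_mul_self a b)
  · exact Subtype.ext (Equiv.swap_mul_self c d)
  · exact Subtype.ext (swap_comm_disjoint hac had hbc hbd)
  · intro h
    have hval : Equiv.swap a b = 1 := congrArg Subtype.val h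
    have : Equiv.swap a b a = a := by rw [hval]; rfl
    rw [Equiv.swap_apply_left] at this
    exact hab this.symm
  · intro h
    have hval : Equiv.swap c d = 1 := congrArg Subtype.val h
    have : Equiv.swap c d c = c := by rw [hval]; rfl
    rw [Equiv.swap_apply_left] at this
    exact hcd this.symm
  · intro h
    have hval : Equiv.swap a b = Equiv.swap c d := congrArg Subtype.val h
    have : Equiv.swap a b a = Equiv.swap c d a := by rw [hval]
    rw [Equiv.swap_apply_left, Equiv.swap_apply_of_ne_of_ne hac had] at this
    exact hab this.symm

variable {G : Type*} [Group G]

lemma epg_adj_iff {x y : G} : (enhancedPowerGraph G).Adj x y ↔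
    x ≠ y ∧ ∃ z : G, x ∈ zpowers z ∧ y ∈ zpowers z := Iff.rfl

lemma exists_pow_of_mem_zpowers {z x : G} (hx : x ∈ zpowers z) {n : ℕ}
    (hn : 0 < n) (hz : z ^ n = 1) : ∃ m : ℕ, m < n ∧ x = z ^ m := by
  obtain ⟨k, rfl⟩ := hx
  have h1 : 0 ≤ k % (n : ℤ) := Int.emod_nonneg k (by exact_mod_cast hn.ne')
  have h2 : k % (n : ℤ) < n := Int.emod_lt_of_pos k (by exact_mod_cast hn)
  refine ⟨(k % (n : ℤ)).toNat, by omega, ?_⟩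
  show z ^ k = z ^ (k % (n : ℤ)).toNat
  have hk : z ^ k = z ^ (k % (n : ℤ)) := by
    conv_lhs => rw [← Int.emod_add_mul_ediv k (n : ℤ)]
    rw [zpow_add, zpow_mul, zpow_natCast, hz, one_zpow, mul_one]
  rw [hk, ← zpow_natCast, Int.toNat_of_nonneg h1]

lemma mem_zpowers_invol {z x : G} (hz : z * z = 1) (hx : x ∈ zpowers z) :
    x = 1 ∨ x = z := by
  obtain ⟨m, hm, rfl⟩ := exists_pow_of_mem_zpowers hx two_pos (by rw [pow_two]; exact hz)
  interval_cases m
  · left; rw [pow_zero]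
  · right; rw [pow_one]

lemma mem_zpowers_ord3 {z x : G} (hz : z * z * z = 1) (hx : x ∈ zpowers z) :
    x = 1 ∨ x = z ∨ x = z * z := by
  obtain ⟨m, hm, rfl⟩ := exists_pow_of_mem_zpowers hx (by norm_num : (0:ℕ) < 3)
    (by rw [pow_succ, pow_two]; exact hz)
  interval_cases m
  · left; rw [pow_zero]
  · right; left; rw [pow_one]
  · right; right; rw [pow_two]

lemma mem_zpowers_ord4 {z x : G} (hz : z * z * z * z = 1) (hx : x ∈ zpowers z) :
    x = 1 ∨ x = z ∨ x = z * z ∨ x = z * z * z := by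
  obtain ⟨m, hm, rfl⟩ := exists_pow_of_mem_zpowers hx (by norm_num : (0:ℕ) < 4)
    (by rw [pow_succ, pow_succ, pow_two]; exact hz)
  interval_cases m
  · left; rw [pow_zero]
  · right; left; rw [pow_one]
  · right; right; left; rw [pow_two]
  · right; right; right; rw [pow_succ, pow_two]

lemma swap_of_zpowers_eq [DecidableEq G] {a b : G} (h : zpowers a = zpowers b) :
    Equiv.swap a b ∈ graphAut (enhancedPowerGraph G) := by
  apply swap_mem_graphAut
  have key : ∀ z : G, a ∈ zpowers z ↔ b ∈ zpowers z := by
    intro z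
    constructor <;> intro hz
    · exact Subgroup.zpowers_le.mpr hz (h ▸ mem_zpowers b)
    · exact Subgroup.zpowers_le.mpr hz (h.symm ▸ mem_zpowers a)
  intro x hxa hxb
  simp only [epg_adj_iff]
  constructor
  · rintro ⟨-, z, h1, h2⟩
    exact ⟨Ne.symm hxb, z, (key z).mp h1, h2⟩
  · rintro ⟨-, z, h1, h2⟩
    exact ⟨Ne.symm hxa, z, (key z).mpr h1, h2⟩

lemma swap_of_terminal [DecidableEq G] {s t : G} (hs1 : s ≠ 1) (ht1 : t ≠ 1)
    (hs2 : s * s = 1) (ht2 : t * t = 1)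
    (hs : ∀ z, s ∈ zpowers z → z = s) (ht : ∀ z, t ∈ zpowers z → z = t) :
    Equiv.swap s t ∈ graphAut (enhancedPowerGraph G) := by
  apply swap_mem_graphAut
  intro x hxs hxt
  have key : ∀ u : G, u ≠ 1 → u * u = 1 → (∀ z, u ∈ zpowers z → z = u) → x ≠ u →
      ((enhancedPowerGraph G).Adj u x ↔ x = 1) := by
    intro u hu1 hu2 hu hxu
    constructor
    · rintro ⟨hne, z, h1, h2⟩
      obtain rfl := hu z h1
      rcases mem_zpowers_invol hu2 h2 with h | h
      · exact h
      · exact absurd h.symm hne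
    · rintro rfl
      exact ⟨hu1, u, mem_zpowers u, one_mem _⟩
  rw [key s hs1 hs2 hs hxs, key t ht1 ht2 ht hxt]

end EPG
section Backward

open Subgroup

lemma aut_dvd_factorial {V : Type*} [Finite V] (Γ : SimpleGraph V) :
    Nat.card ↥(graphAut Γ) ∣ (Nat.card V).factorial := by
  classical
  have := Fintype.ofFinite V
  have h := Subgroup.card_subgroup_dvd_card (graphAut Γ)
  rw [Nat.card_eq_fintype_card (α := Equiv.Perm V), Fintype.card_perm] at h
  rwa [Nat.card_eq_fintype_card (α := V)]

lemma exists_two_ne_one {G : Type*} [Group G] [Fintype G] (h : 3 ≤ Fintype.card G) :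
    ∃ x₁ x₂ : G, x₁ ≠ 1 ∧ x₂ ≠ 1 ∧ x₁ ≠ x₂ := by
  classical
  have hs : 1 < (Finset.univ.erase (1 : G)).card := by
    have := Finset.card_erase_of_mem (Finset.mem_univ (1 : G))
    rw [this, Finset.card_univ]; omega
  obtain ⟨a, ha, b, hb, hab⟩ := Finset.one_lt_card.mp hs
  exact ⟨a, b, Finset.ne_of_mem_erase ha, Finset.ne_of_mem_erase hb, hab⟩

lemma aut_dvd_six_of_exp_two {G : Type*} [Group G] [Fintype G]
    (hexp : ∀ x : G, x * x = 1) (hcard : Fintype.card G = 4) :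
    Nat.card ↥(graphAut (enhancedPowerGraph G)) ∣ 6 := by
  classical
  have hfix : ∀ σ ∈ graphAut (enhancedPowerGraph G), σ 1 = 1 := by
    intro σ hσ
    by_contra ht
    have hall : ∀ x : G, x ≠ 1 → σ x = 1 := by
      intro x hx
      have hadj : (enhancedPowerGraph G).Adj 1 x := ⟨Ne.symm hx, x, one_mem _, mem_zpowers x⟩
      obtain ⟨hne, z, h1, h2⟩ := (hσ 1 x).mpr hadj
      rcases mem_zpowers_invol (hexp z) h1 with h | h
      · exact absurd h ht
      · subst h
        rcases mem_zpowers_invol (hexp (σ 1)) h2 with h | h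
        · exact h
        · exact absurd h.symm hne
    obtain ⟨x₁, x₂, h1, h2, h12⟩ := exists_two_ne_one (G := G) (by omega)
    exact h12 (σ.injective ((hall x₁ h1).trans (hall x₂ h2).symm))
  have hiff : ∀ σ : ↥(graphAut (enhancedPowerGraph G)), ∀ x : G, x ≠ 1 ↔ σ.1 x ≠ 1 := by
    intro σ x
    constructor
    · intro hx h
      exact hx (σ.1.injective (h.trans (hfix σ.1 σ.2).symm))
    · intro h hx
      exact h (hx ▸ hfix σ.1 σ.2)
  let ψ : ↥(graphAut (enhancedPowerGraph G)) →* Equiv.Perm {x : G // x ≠ 1} :=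
    MonoidHom.mk' (fun σ => Equiv.Perm.subtypePerm σ.1 (fun x => (hiff σ x).symm))
      (fun σ τ => Equiv.ext fun x => rfl)
  have hinj : Function.Injective ψ := by
    rw [injective_iff_map_eq_one]
    intro σ h
    ext x
    show σ.1 x = x
    rcases eq_or_ne x 1 with rfl | hx
    · exact hfix σ.1 σ.2
    · exact congrArg Subtype.val (Equiv.ext_iff.mp h ⟨x, hx⟩)
  have hdvd := Subgroup.card_dvd_of_injective ψ hinj
  have hc : Nat.card (Equiv.Perm {x : G // x ≠ 1}) = 6 := by
    rw [Nat.card_eq_fintype_card, Fintype.card_perm]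
    have : Fintype.card {x : G // x ≠ 1} = 3 := by
      have := Fintype.card_subtype_compl (fun x : G => x = 1)
      rw [Fintype.card_subtype_eq, hcard] at this
      exact this
    rw [this]
    rfl
  rwa [hc] at hdvd

end Backward
section Isos

open Subgroup

lemma cyclic_iso_of_prime_card {G : Type*} [Group G] [Fintype G] {p : ℕ} [Fact p.Prime]
    (hcard : Fintype.card G = p) : Nonempty (G ≃* Multiplicative (ZMod p)) := by
  have hn : Nat.card G = p := Nat.card_eq_fintype_card.trans hcard
  have hc : IsCyclic G := isCyclic_of_prime_card hn
  have e := zmodCyclicMulEquiv hc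
  rw [hn] at e
  exact ⟨e.symm⟩

lemma comm_of_exp_two {G : Type*} [Group G] (hexp : ∀ x : G, x * x = 1) :
    ∀ u v : G, u * v = v * u := by
  intro u v
  have h1 : ∀ x : G, x⁻¹ = x := fun x => inv_eq_of_mul_eq_one_right (hexp x)
  have h2 : (u * v)⁻¹ = u * v := h1 (u * v)
  rw [mul_inv_rev, h1, h1] at h2
  exact h2.symm ▸ h2

lemma v4_mulEquiv {G : Type*} [Group G] [Fintype G]
    (hexp : ∀ x : G, x * x = 1) (hcard : Fintype.card G = 4) :
    Nonempty (G ≃* Multiplicative (ZMod 2 × ZMod 2)) := by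
  classical
  have hcomm := comm_of_exp_two hexp
  obtain ⟨a, b, ha1, hb1, hab⟩ := exists_two_ne_one (G := G) (by omega)
  have hz : ∀ u : ZMod 2, u = 0 ∨ u = 1 := by decide
  set A : ZMod 2 → G := fun u => if u = 1 then a else 1 with hA
  set B : ZMod 2 → G := fun u => if u = 1 then b else 1 with hB
  have hAadd : ∀ u v : ZMod 2, A (u + v) = A u * A v := by
    intro u v
    rcases hz u with rfl | rfl <;> rcases hz v with rfl | rfl <;>
      simp [hA, hexp a, (by decide : (1 + 1 : ZMod 2) = 0)]
  have hBadd : ∀ u v : ZMod 2, B (u + v) = B u * B v := by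
    intro u v
    rcases hz u with rfl | rfl <;> rcases hz v with rfl | rfl <;>
      simp [hB, hexp b, (by decide : (1 + 1 : ZMod 2) = 0)]
  let f : Multiplicative (ZMod 2 × ZMod 2) →* G :=
    MonoidHom.mk' (fun x => A (Multiplicative.toAdd x).1 * B (Multiplicative.toAdd x).2)
      (by
        intro x y
        show A ((Multiplicative.toAdd x).1 + (Multiplicative.toAdd y).1) *
            B ((Multiplicative.toAdd x).2 + (Multiplicative.toAdd y).2) = _
        rw [hAadd, hBadd]
        rw [mul_assoc, ← mul_assoc (A (Multiplicative.toAdd y).1),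
          hcomm (A (Multiplicative.toAdd y).1), mul_assoc, ← mul_assoc])
  have hinj : Function.Injective f := by
    rw [injective_iff_map_eq_one]
    intro x hx
    have hx' : A (Multiplicative.toAdd x).1 * B (Multiplicative.toAdd x).2 = 1 := hx
    rcases hz (Multiplicative.toAdd x).1 with h1 | h1 <;>
      rcases hz (Multiplicative.toAdd x).2 with h2 | h2
    · show x = Multiplicative.ofAdd 0
      apply Multiplicative.toAdd.injective
      exact Prod.ext h1 h2
    · rw [h1, h2] at hx'; simp [hA, hB] at hx'; exact absurd hx' hb1
    · rw [h1, h2] at hx'; simp [hA, hB] at hx'; exact absurd hx' ha1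
    · rw [h1, h2] at hx'
      simp only [hA, hB, if_pos rfl] at hx'
      have : a = b := by
        have hbinv : b⁻¹ = b := inv_eq_of_mul_eq_one_right (hexp b)
        rw [← hbinv]; exact eq_inv_of_mul_eq_one_left hx'
      exact absurd this hab
  have hbij : Function.Bijective f := by
    rw [Fintype.bijective_iff_injective_and_card]
    refine ⟨hinj, ?_⟩
    rw [hcard]
    rfl
  exact ⟨(MulEquiv.ofBijective f hbij).symm⟩

end Isos
section Main

open Subgroup

lemma four_distinct_of_card {α : Type*} [DecidableEq α] {s : Finset α} (h : 4 ≤ s.card) :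
    ∃ a ∈ s, ∃ b ∈ s, ∃ c ∈ s, ∃ d ∈ s,
      a ≠ b ∧ a ≠ c ∧ a ≠ d ∧ b ≠ c ∧ b ≠ d ∧ c ≠ d := by
  obtain ⟨a, ha⟩ := Finset.card_pos.mp (show 0 < s.card by omega)
  have h1 : 3 ≤ (s.erase a).card := by
    rw [Finset.card_erase_of_mem ha]; omega
  obtain ⟨b, hb⟩ := Finset.card_pos.mp (show 0 < (s.erase a).card by omega)
  have h2 : 2 ≤ ((s.erase a).erase b).card := by
    rw [Finset.card_erase_of_mem hb]; omega
  obtain ⟨c, hc⟩ := Finset.card_pos.mp (by omega : 0 < ((s.erase a).erase b).card)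
  have h3 : 1 ≤ (((s.erase a).erase b).erase c).card := by
    rw [Finset.card_erase_of_mem hc]; omega
  obtain ⟨d, hd⟩ := Finset.card_pos.mp (by omega : 0 < (((s.erase a).erase b).erase c).card)
  have hd' := Finset.mem_of_mem_erase hd
  have hc' := Finset.mem_of_mem_erase hc
  have hd'' := Finset.mem_of_mem_erase hd'
  refine ⟨a, ha, b, Finset.mem_of_mem_erase hb, c, Finset.mem_of_mem_erase hc',
    d, Finset.mem_of_mem_erase hd'', ?_, ?_, ?_, ?_, ?_, ?_⟩
  · exact (Finset.ne_of_mem_erase hb).symm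
  · exact (Finset.ne_of_mem_erase hc').symm
  · exact (Finset.ne_of_mem_erase hd'').symm
  · exact (Finset.ne_of_mem_erase hc).symm
  · exact (Finset.ne_of_mem_erase hd').symm
  · exact (Finset.ne_of_mem_erase hd).symm

lemma multZmod22_sq : ∀ y : Multiplicative (ZMod 2 × ZMod 2), y * y = 1 := by decide

theorem stmt_16' {G : Type*} [Group G] [Fintype G] [Nontrivial G] :
    Squarefree (Nat.card ↥(graphAut (enhancedPowerGraph G))) ↔
      (Nonempty (G ≃* Multiplicative (ZMod 2)) ∨
       Nonempty (G ≃* Multiplicative (ZMod 3)) ∨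
       Nonempty (G ≃* Multiplicative (ZMod 2 × ZMod 2))) := by
  classical
  haveI : Fact (Nat.Prime 2) := ⟨Nat.prime_two⟩
  haveI : Fact (Nat.Prime 3) := ⟨by norm_num⟩
  constructor
  · intro hsf
    have klein : ∀ a b c d : G, a ≠ b → c ≠ d → a ≠ c → a ≠ d → b ≠ c → b ≠ d →
        Equiv.swap a b ∈ graphAut (enhancedPowerGraph G) →
        Equiv.swap c d ∈ graphAut (enhancedPowerGraph G) → False :=
      fun a b c d h1 h2 h3 h4 h5 h6 s1 s2 =>
        not_squarefree_aut (enhancedPowerGraph G) h1 h2 h3 h4 h5 h6 s1 s2 hsf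
    have hne_inv : ∀ g : G, g * g ≠ 1 → g ≠ g⁻¹ := by
      intro g hg he
      apply hg
      nth_rewrite 2 [he]
      exact mul_inv_cancel g
    have hTpair : ∀ g h : G, g ≠ 1 → g * g ≠ 1 → h ≠ 1 → h * h ≠ 1 → h = g ∨ h = g⁻¹ := by
      intro g h hg1 hg2 hh1 hh2
      by_contra hcon
      push_neg at hcon
      obtain ⟨hne1, hne2⟩ := hcon
      refine klein g g⁻¹ h h⁻¹ (hne_inv g hg2) (hne_inv h hh2)
        (fun he => hne1 he.symm)
        (fun he => hne2 (by rw [he, inv_inv]))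
        (fun he => hne2 he.symm)
        (fun he => hne1 (by rw [← inv_inv h, ← he, inv_inv]))
        (swap_of_zpowers_eq (zpowers_inv (g := g)).symm)
        (swap_of_zpowers_eq (zpowers_inv (g := h)).symm)
    by_cases hT : ∀ x : G, x = 1 ∨ x * x = 1
    · -- exponent 2
      have hexp : ∀ x : G, x * x = 1 :=
        fun x => (hT x).elim (fun h => by rw [h, one_mul]) id
      have hterm : ∀ s : G, s ≠ 1 → ∀ z, s ∈ zpowers z → z = s := by
        intro s hs z hz
        rcases mem_zpowers_invol (hexp z) hz with h | h
        · exact absurd h hs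
        · exact h.symm
      have hcard_le : Fintype.card G ≤ 4 := by
        by_contra hlt
        push_neg at hlt
        have hs : 4 ≤ (Finset.univ.erase (1 : G)).card := by
          rw [Finset.card_erase_of_mem (Finset.mem_univ 1), Finset.card_univ]; omega
        obtain ⟨a, ha, b, hb, c, hc, d, hd, h1, h2, h3, h4, h5, h6⟩ := four_distinct_of_card hs
        have ha1 := Finset.ne_of_mem_erase ha
        have hb1 := Finset.ne_of_mem_erase hb
        have hc1 := Finset.ne_of_mem_erase hc
        have hd1 := Finset.ne_of_mem_erase hd
        exact klein a b c d h1 h6 h2 h3 h4 h5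
          (swap_of_terminal ha1 hb1 (hexp a) (hexp b) (hterm a ha1) (hterm b hb1))
          (swap_of_terminal hc1 hd1 (hexp c) (hexp d) (hterm c hc1) (hterm d hd1))
      have hcard_ge : 2 ≤ Fintype.card G := Fintype.one_lt_card
      interval_cases hcard : Fintype.card G
      · exact Or.inl (cyclic_iso_of_prime_card hcard)
      · exfalso
        obtain ⟨g, hg⟩ := exists_prime_orderOf_dvd_card 3 (by rw [hcard])
        have hg1 : g ≠ 1 := by
          intro h
          rw [h, orderOf_one] at hg
          omega
        have : orderOf g ∣ 2 := orderOf_dvd_of_pow_eq_one (by rw [pow_two]; exact hexp g)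
        rw [hg] at this
        omega
      · exact Or.inr (Or.inr (v4_mulEquiv hexp hcard))
    · -- there is an element of order ≥ 3
      push_neg at hT
      obtain ⟨g, hg1, hg2⟩ := hT
      have hgg : g ≠ g⁻¹ := hne_inv g hg2
      have hzpg : zpowers g = zpowers g⁻¹ := (zpowers_inv (g := g)).symm
      have hginv1 : g⁻¹ ≠ 1 := fun h => hg1 (by rw [← inv_inv g, h, inv_one])
      by_cases hA : g * g = g⁻¹
      · -- order 3
        have hg3 : g * g * g = 1 := by rw [hA, inv_mul_cancel]
        have hgg2 : (g * g) * (g * g) ≠ 1 := by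
          rw [hA]
          intro h
          rw [← mul_inv_rev] at h
          exact hg2 (inv_eq_one.mp h)
        have hterm3 : ∀ s : G, s ≠ 1 → s * s = 1 → ∀ z, s ∈ zpowers z → z = s := by
          intro s hs1 hs2 z hz
          by_cases hz2 : z * z = 1
          · rcases mem_zpowers_invol hz2 hz with h | h
            · exact absurd h hs1
            · exact h.symm
          · have hz1 : z ≠ 1 := by
              intro h
              rw [h, one_mul] at hz2
              exact hz2 rfl
            exfalso
            have hmem : s ∈ zpowers g := by
              rcases hTpair g z hg1 hg2 hz1 hz2 with rfl | rfl
              · exact hz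
              · exact hzpg ▸ hz
            rcases mem_zpowers_ord3 hg3 hmem with h | h | h
            · exact hs1 h
            · rw [h] at hs2; exact hg2 hs2
            · rw [h] at hs2; exact hgg2 hs2
        by_cases hex : ∃ t : G, t ∉ zpowers g
        · exfalso
          obtain ⟨t, ht⟩ := hex
          have ht1 : t ≠ 1 := fun h => ht (h ▸ one_mem _)
          have htT : t * t = 1 := by
            by_contra htt
            rcases hTpair g t hg1 hg2 ht1 htt with rfl | rfl
            · exact ht (mem_zpowers t)
            · exact ht (inv_mem (mem_zpowers g))
          set u := g * t * g⁻¹ with hu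
          have hu2 : u * u = 1 := by
            rw [hu, show (g*t*g⁻¹)*(g*t*g⁻¹) = g*(t*t)*g⁻¹ by group, htT, mul_one,
              mul_inv_cancel]
          have hu1 : u ≠ 1 := by
            intro h
            rw [hu, mul_inv_eq_one] at h
            exact ht1 (mul_left_cancel (h.trans (mul_one g).symm))
          have hut : u ≠ t := by
            intro h
            have hcm : g * t = t * g := by rwa [hu, mul_inv_eq_iff_eq_mul] at h
            have hgt1 : g * t ≠ 1 := by
              intro hh
              have : t = g⁻¹ := eq_inv_of_mul_eq_one_right hh
              exact ht (this ▸ inv_mem (mem_zpowers g))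
            have hgtT : (g * t) * (g * t) ≠ 1 := by
              rw [mul_assoc, ← mul_assoc t g t, ← hcm, mul_assoc, htT, mul_one]
              exact hg2
            rcases hTpair g (g*t) hg1 hg2 hgt1 hgtT with hh | hh
            · exact ht1 (mul_left_cancel (hh.trans (mul_one g).symm))
            · rw [← hA] at hh
              exact ht (by rw [mul_left_cancel hh]; exact mem_zpowers g)
          have hum : u ∉ zpowers g := by
            intro hmem
            rcases mem_zpowers_ord3 hg3 hmem with h | h | h
            · exact hu1 h
            · rw [h] at hu2; exact hg2 hu2
            · rw [h] at hu2; exact hgg2 hu2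
          have htg : t ≠ g := fun h => ht (h ▸ mem_zpowers g)
          have htgi : t ≠ g⁻¹ := fun h => ht (h ▸ inv_mem (mem_zpowers g))
          have hug : u ≠ g := fun h => hum (h ▸ mem_zpowers g)
          have hugi : u ≠ g⁻¹ := fun h => hum (h ▸ inv_mem (mem_zpowers g))
          exact klein g g⁻¹ t u hgg (Ne.symm hut) (Ne.symm htg) (Ne.symm hug)
            (Ne.symm htgi) (Ne.symm hugi)
            (swap_of_zpowers_eq hzpg)
            (swap_of_terminal ht1 hu1 htT hu2 (hterm3 t ht1 htT) (hterm3 u hu1 hu2))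
        · push_neg at hex
          right; left
          have horder : orderOf g = 3 :=
            orderOf_eq_prime (by rw [pow_succ, pow_two]; exact hg3) hg1
          have hcard : Fintype.card G = 3 := by
            rw [← Nat.card_eq_fintype_card, ← orderOf_eq_card_of_forall_mem_zpowers hex, horder]
          exact cyclic_iso_of_prime_card hcard
      · -- order 4 : always contradiction
        exfalso
        have hg4 : (g * g) * (g * g) = 1 := by
          by_contra hgg4
          rcases hTpair g (g*g) hg1 hg2 hg2 hgg4 with hh | hh
          · exact hg1 (by rwa [mul_eq_left] at hh)
          · exact hA hh
        have hg4' : g * g * g * g = 1 := by rw [mul_assoc (g*g) g g]; exact hg4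
        have hig : g * g ≠ g := fun h => hg1 (by rwa [mul_eq_left] at h)
        have hterm4 : ∀ s : G, s ≠ 1 → s * s = 1 → s ∉ zpowers g →
            ∀ z, s ∈ zpowers z → z = s := by
          intro s hs1 hs2 hsm z hz
          by_cases hz2 : z * z = 1
          · rcases mem_zpowers_invol hz2 hz with h | h
            · exact absurd h hs1
            · exact h.symm
          · have hz1 : z ≠ 1 := by
              intro h; rw [h, one_mul] at hz2; exact hz2 rfl
            exfalso
            apply hsm
            rcases hTpair g z hg1 hg2 hz1 hz2 with rfl | rfl
            · exact hz
            · exact hzpg ▸ hz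
        by_cases hex : ∃ t : G, t ∉ zpowers g
        · obtain ⟨t, ht⟩ := hex
          have ht1 : t ≠ 1 := fun h => ht (h ▸ one_mem _)
          have htT : t * t = 1 := by
            by_contra htt
            rcases hTpair g t hg1 hg2 ht1 htt with rfl | rfl
            · exact ht (mem_zpowers t)
            · exact ht (inv_mem (mem_zpowers g))
          set u := g * t * g⁻¹ with hu
          have hu2 : u * u = 1 := by
            rw [hu, show (g*t*g⁻¹)*(g*t*g⁻¹) = g*(t*t)*g⁻¹ by group, htT, mul_one,
              mul_inv_cancel]
          have hu1 : u ≠ 1 := by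
            intro h
            rw [hu, mul_inv_eq_one] at h
            exact ht1 (mul_left_cancel (h.trans (mul_one g).symm))
          have hut : u ≠ t := by
            intro h
            have hcm : g * t = t * g := by rwa [hu, mul_inv_eq_iff_eq_mul] at h
            have hgt1 : g * t ≠ 1 := by
              intro hh
              have : t = g⁻¹ := eq_inv_of_mul_eq_one_right hh
              exact ht (this ▸ inv_mem (mem_zpowers g))
            have hgtT : (g * t) * (g * t) ≠ 1 := by
              rw [mul_assoc, ← mul_assoc t g t, ← hcm, mul_assoc, htT, mul_one]
              exact hg2
            rcases hTpair g (g*t) hg1 hg2 hgt1 hgtT with hh | hh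
            · exact ht1 (mul_left_cancel (hh.trans (mul_one g).symm))
            · have : t = g⁻¹ * g⁻¹ := mul_left_cancel
                (hh.trans (by rw [← mul_assoc, mul_inv_cancel, one_mul]))
              apply ht
              rw [this]
              exact mul_mem (inv_mem (mem_zpowers g)) (inv_mem (mem_zpowers g))
          have hum : u ∉ zpowers g := by
            intro hmem
            apply hut
            have hcomm : g * u = u * g := by
              obtain ⟨k, hk⟩ := hmem
              rw [← hk]
              exact ((Commute.refl g).zpow_right k).eq
            have hug : u * g = g * t := by rw [hu, inv_mul_cancel_right]
            have : g * u = g * t := by rw [hcomm, hug]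
            exact mul_left_cancel this
          have htg : t ≠ g := fun h => ht (h ▸ mem_zpowers g)
          have htgi : t ≠ g⁻¹ := fun h => ht (h ▸ inv_mem (mem_zpowers g))
          have hug : u ≠ g := fun h => hum (h ▸ mem_zpowers g)
          have hugi : u ≠ g⁻¹ := fun h => hum (h ▸ inv_mem (mem_zpowers g))
          exact klein g g⁻¹ t u hgg (Ne.symm hut) (Ne.symm htg) (Ne.symm hug)
            (Ne.symm htgi) (Ne.symm hugi)
            (swap_of_zpowers_eq hzpg)
            (swap_of_terminal ht1 hu1 htT hu2
              (hterm4 t ht1 htT ht) (hterm4 u hu1 hu2 hum))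
        · push_neg at hex
          -- G is cyclic of order 4: pairs (g, g⁻¹) and (1, g*g)
          have hswap2 : Equiv.swap (1 : G) (g * g) ∈ graphAut (enhancedPowerGraph G) := by
            apply swap_mem_graphAut
            intro x hx1 hxi
            have hadj1 : (enhancedPowerGraph G).Adj 1 x :=
              ⟨Ne.symm hx1, g, one_mem _, hex x⟩
            have hadj2 : (enhancedPowerGraph G).Adj (g * g) x :=
              ⟨Ne.symm hxi, g, mul_mem (mem_zpowers g) (mem_zpowers g), hex x⟩
            exact iff_of_true hadj1 hadj2
          exact klein g g⁻¹ 1 (g * g) hgg (Ne.symm hg2) hg1 (Ne.symm hig) hginv1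
            (fun h => hA h.symm)
            (swap_of_zpowers_eq hzpg) hswap2
  · intro hyp
    have sf2 : Squarefree 2 := Nat.prime_two.squarefree
    have sf6 : Squarefree 6 := by
      have h23 : (6 : ℕ) = 2 * 3 := by norm_num
      rw [h23]
      exact (Nat.squarefree_mul (by norm_num)).mpr
        ⟨Nat.prime_two.squarefree, (by norm_num : Nat.Prime 3).squarefree⟩
    obtain hyp | hyp | hyp := hyp
    · obtain ⟨e⟩ := hyp
      have hcard : Nat.card G = 2 := by
        rw [Nat.card_congr e.toEquiv, Nat.card_eq_fintype_card, Fintype.card_multiplicative,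
          ZMod.card]
      have hdvd := aut_dvd_factorial (enhancedPowerGraph G)
      rw [hcard] at hdvd
      exact Squarefree.squarefree_of_dvd hdvd (by rw [show Nat.factorial 2 = 2 from rfl]; exact sf2)
    · obtain ⟨e⟩ := hyp
      have hcard : Nat.card G = 3 := by
        rw [Nat.card_congr e.toEquiv, Nat.card_eq_fintype_card, Fintype.card_multiplicative,
          ZMod.card]
      have hdvd := aut_dvd_factorial (enhancedPowerGraph G)
      rw [hcard] at hdvd
      exact Squarefree.squarefree_of_dvd hdvd (by rw [show Nat.factorial 3 = 6 from rfl]; exact sf6)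
    · obtain ⟨e⟩ := hyp
      have hexp : ∀ x : G, x * x = 1 := by
        intro x
        apply e.injective
        rw [map_mul, map_one]
        exact multZmod22_sq (e x)
      have hcard : Fintype.card G = 4 := by
        rw [← Nat.card_eq_fintype_card, Nat.card_congr e.toEquiv, Nat.card_eq_fintype_card,
          Fintype.card_multiplicative]
        rfl
      exact Squarefree.squarefree_of_dvd (aut_dvd_six_of_exp_two hexp hcard) sf6

end Main

theorem stmt_16 {G : Type*} [Group G] [Fintype G] [Nontrivial G] :
    Squarefree (Nat.card ↥(graphAut (enhancedPowerGraph G))) ↔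
      (Nonempty (G ≃* Multiplicative (ZMod 2)) ∨
       Nonempty (G ≃* Multiplicative (ZMod 3)) ∨
       Nonempty (G ≃* Multiplicative (ZMod 2 × ZMod 2))) := by
  exact stmt_16'
end
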